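/- Let Z₁, Z₂ ∈ ℝ² be nonzero planar vectors, and let Δ ∈ [0, π/2] be the angle between the lines spanned by Z₁ and Z₂ (i.e. Δ = β if β ≤ π/2, else Δ = π − β, where β is the angle between the vectors). Define the reflected vectors Z̃₁ = (−|Z₁ₓ|, |Z₁ᵧ|) and Z̃₂ = (−|Z₂ₓ|, −|Z₂ᵧ|) and let Δ̃ be the angle between the lines spanned by Z̃₁ and Z̃₂. Then Δ̃ ≥ Δ, with equality if and only if Z₁ and Z₂ lie in two adjacent closed quadrants. -/

import Mathlib

open Real

/-- Euclidean norm on `ℝ × ℝ`. -/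
noncomputable def n2 (p : ℝ × ℝ) : ℝ := Real.sqrt (p.1 ^ 2 + p.2 ^ 2)

/-- The angle in `[0, π/2]` between the lines spanned by two nonzero vectors. -/
noncomputable def lineAngle (Z W : ℝ × ℝ) : ℝ :=
  let β := Real.arccos ((Z.1 * W.1 + Z.2 * W.2) / (n2 Z * n2 W))
  if β ≤ π / 2 then β else π - β

/-- Membership in the four closed quadrants. -/
def inQ1 (p : ℝ × ℝ) : Prop := 0 ≤ p.1 ∧ 0 ≤ p.2
def inQ2 (p : ℝ × ℝ) : Prop := p.1 ≤ 0 ∧ 0 ≤ p.2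
def inQ3 (p : ℝ × ℝ) : Prop := p.1 ≤ 0 ∧ p.2 ≤ 0
def inQ4 (p : ℝ × ℝ) : Prop := 0 ≤ p.1 ∧ p.2 ≤ 0

/-- `Z` and `W` lie in two adjacent closed quadrants (sharing a boundary axis). -/
def AdjacentQuadrants (Z W : ℝ × ℝ) : Prop :=
  (inQ1 Z ∧ inQ2 W) ∨ (inQ2 Z ∧ inQ1 W) ∨ (inQ2 Z ∧ inQ3 W) ∨ (inQ3 Z ∧ inQ2 W) ∨
  (inQ3 Z ∧ inQ4 W) ∨ (inQ4 Z ∧ inQ3 W) ∨ (inQ4 Z ∧ inQ1 W) ∨ (inQ1 Z ∧ inQ4 W)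

/-- The reflections `Z̃₁ = (−|Z₁ₓ|, |Z₁ᵧ|)`, `Z̃₂ = (−|Z₂ₓ|, −|Z₂ᵧ|)`. -/
noncomputable def refl1 (Z : ℝ × ℝ) : ℝ × ℝ := (-|Z.1|, |Z.2|)
noncomputable def refl2 (Z : ℝ × ℝ) : ℝ × ℝ := (-|Z.1|, -|Z.2|)

/- Auxiliary lemmas -/

lemma arccos_anti {x y : ℝ} (h : x ≤ y) : Real.arccos y ≤ Real.arccos x := by
  unfold Real.arccos
  have := Real.monotone_arcsin h
  linarith

lemma n2_nonneg (Z : ℝ × ℝ) : 0 ≤ n2 Z := Real.sqrt_nonneg _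

lemma n2_pos {Z : ℝ × ℝ} (h : Z ≠ 0) : 0 < n2 Z := by
  apply Real.sqrt_pos.mpr
  rcases eq_or_ne Z.1 0 with hz | hz
  · have hz2 : Z.2 ≠ 0 := fun hz2 => h (Prod.ext_iff.mpr ⟨hz, hz2⟩)
    positivity
  · positivity

lemma n2_refl1 (Z : ℝ × ℝ) : n2 (refl1 Z) = n2 Z := by
  simp [n2, refl1, neg_pow, sq_abs]

lemma n2_refl2 (Z : ℝ × ℝ) : n2 (refl2 Z) = n2 Z := by
  simp [n2, refl2, neg_pow, sq_abs]

lemma cauchy (Z W : ℝ × ℝ) : |Z.1 * W.1 + Z.2 * W.2| ≤ n2 Z * n2 W := by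
  have h1 : n2 Z * n2 W = Real.sqrt ((Z.1 ^ 2 + Z.2 ^ 2) * (W.1 ^ 2 + W.2 ^ 2)) :=
    (Real.sqrt_mul (by positivity) _).symm
  rw [h1, ← Real.sqrt_sq_eq_abs]
  apply Real.sqrt_le_sqrt
  nlinarith [sq_nonneg (Z.1 * W.2 - Z.2 * W.1)]

lemma lineAngle_eq (Z W : ℝ × ℝ) :
    lineAngle Z W = Real.arccos |(Z.1 * W.1 + Z.2 * W.2) / (n2 Z * n2 W)| := by
  unfold lineAngle
  set t := (Z.1 * W.1 + Z.2 * W.2) / (n2 Z * n2 W) with ht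
  by_cases h : 0 ≤ t
  · rw [if_pos (Real.arccos_le_pi_div_two.mpr h), abs_of_nonneg h]
  · push_neg at h
    rw [if_neg, abs_of_neg h, Real.arccos_neg]
    rw [not_le]
    have : ¬ (0 : ℝ) ≤ t := not_le.mpr h
    have h2 := Real.arccos_le_pi_div_two (x := t)
    rcases lt_or_ge (π / 2) (Real.arccos t) with h3 | h3
    · exact h3
    · exact absurd (h2.mp h3) this

lemma abs_key {p q : ℝ} : |(|p| - |q|)| = |p + q| ↔ p * q ≤ 0 := by
  constructor
  · intro h
    by_contra hc
    push_neg at hc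
    rcases mul_pos_iff.mp hc with ⟨hp, hq⟩ | ⟨hp, hq⟩
    · rw [abs_of_pos hp, abs_of_pos hq, abs_of_pos (by linarith : (0:ℝ) < p + q)] at h
      rcases abs_cases (p - q) with ⟨h3, _⟩ | ⟨h3, _⟩ <;> nlinarith
    · rw [abs_of_neg hp, abs_of_neg hq, abs_of_neg (by linarith : p + q < 0)] at h
      rcases abs_cases (-p - -q) with ⟨h3, _⟩ | ⟨h3, _⟩ <;> nlinarith
  · intro h
    rcases mul_nonpos_iff.mp h with ⟨hp, hq⟩ | ⟨hp, hq⟩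
    · rw [abs_of_nonneg hp, abs_of_nonpos hq]
      have : p - -q = p + q := by ring
      rw [this]
    · rw [abs_of_nonpos hp, abs_of_nonneg hq]
      have h2 : -p - q = -(p + q) := by ring
      rw [h2, abs_neg]

lemma sgn_help {a b c d : ℝ} (h1 : a * c ≤ 0) (h2 : 0 ≤ b * d) : (a * c) * (b * d) ≤ 0 :=
  mul_nonpos_iff.mpr (Or.inr ⟨h1, h2⟩)

lemma sgn_help' {a b c d : ℝ} (h1 : 0 ≤ a * c) (h2 : b * d ≤ 0) : (a * c) * (b * d) ≤ 0 :=
  mul_nonpos_iff.mpr (Or.inl ⟨h1, h2⟩)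

lemma adj_iff (Z W : ℝ × ℝ) :
    AdjacentQuadrants Z W ↔ (Z.1 * W.1) * (Z.2 * W.2) ≤ 0 := by
  constructor
  · rintro (⟨⟨a, b⟩, c, d⟩ | ⟨⟨a, b⟩, c, d⟩ | ⟨⟨a, b⟩, c, d⟩ | ⟨⟨a, b⟩, c, d⟩ |
      ⟨⟨a, b⟩, c, d⟩ | ⟨⟨a, b⟩, c, d⟩ | ⟨⟨a, b⟩, c, d⟩ | ⟨⟨a, b⟩, c, d⟩)
    · exact sgn_help (mul_nonpos_iff.mpr (Or.inl ⟨a, c⟩)) (mul_nonneg b d)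
    · exact sgn_help (mul_nonpos_iff.mpr (Or.inr ⟨a, c⟩)) (mul_nonneg b d)
    · exact sgn_help' (mul_nonneg_iff.mpr (Or.inr ⟨a, c⟩)) (mul_nonpos_iff.mpr (Or.inl ⟨b, d⟩))
    · exact sgn_help' (mul_nonneg_iff.mpr (Or.inr ⟨a, c⟩)) (mul_nonpos_iff.mpr (Or.inr ⟨b, d⟩))
    · exact sgn_help (mul_nonpos_iff.mpr (Or.inr ⟨a, c⟩)) (mul_nonneg_iff.mpr (Or.inr ⟨b, d⟩))
    · exact sgn_help (mul_nonpos_iff.mpr (Or.inl ⟨a, c⟩)) (mul_nonneg_iff.mpr (Or.inr ⟨b, d⟩))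
    · exact sgn_help' (mul_nonneg a c) (mul_nonpos_iff.mpr (Or.inr ⟨b, d⟩))
    · exact sgn_help' (mul_nonneg a c) (mul_nonpos_iff.mpr (Or.inl ⟨b, d⟩))
  · intro h
    rcases mul_nonpos_iff.mp h with ⟨hp, hq⟩ | ⟨hp, hq⟩
    · rcases mul_nonneg_iff.mp hp with ⟨a, c⟩ | ⟨a, c⟩ <;>
        rcases mul_nonpos_iff.mp hq with ⟨b, d⟩ | ⟨b, d⟩
      · exact Or.inr (Or.inr (Or.inr (Or.inr (Or.inr (Or.inr (Or.inr ⟨⟨a, b⟩, c, d⟩))))))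
      · exact Or.inr (Or.inr (Or.inr (Or.inr (Or.inr (Or.inr (Or.inl ⟨⟨a, b⟩, c, d⟩))))))
      · exact Or.inr (Or.inr (Or.inl ⟨⟨a, b⟩, c, d⟩))
      · exact Or.inr (Or.inr (Or.inr (Or.inl ⟨⟨a, b⟩, c, d⟩)))
    · rcases mul_nonpos_iff.mp hp with ⟨a, c⟩ | ⟨a, c⟩ <;>
        rcases mul_nonneg_iff.mp hq with ⟨b, d⟩ | ⟨b, d⟩
      · exact Or.inl ⟨⟨a, b⟩, c, d⟩
      · exact Or.inr (Or.inr (Or.inr (Or.inr (Or.inr (Or.inl ⟨⟨a, b⟩, c, d⟩)))))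
      · exact Or.inr (Or.inl ⟨⟨a, b⟩, c, d⟩)
      · exact Or.inr (Or.inr (Or.inr (Or.inr (Or.inl ⟨⟨a, b⟩, c, d⟩))))

/-- For nonzero `Z₁, Z₂`, the angle between the lines spanned by the reflected vectors is at
least the angle between the original lines, with equality iff `Z₁, Z₂` lie in two adjacent
closed quadrants. -/
theorem stmt16 (Z1 Z2 : ℝ × ℝ) (h1 : Z1 ≠ 0) (h2 : Z2 ≠ 0) :
    lineAngle (refl1 Z1) (refl2 Z2) ≥ lineAngle Z1 Z2 ∧
    (lineAngle (refl1 Z1) (refl2 Z2) = lineAngle Z1 Z2 ↔ AdjacentQuadrants Z1 Z2) := by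
  have hD : 0 < n2 Z1 * n2 Z2 := mul_pos (n2_pos h1) (n2_pos h2)
  set p := Z1.1 * Z2.1 with hp
  set q := Z1.2 * Z2.2 with hq
  have hdott : (refl1 Z1).1 * (refl2 Z2).1 + (refl1 Z1).2 * (refl2 Z2).2 = |p| - |q| := by
    simp [refl1, refl2, hp, hq, abs_mul]
    ring
  have hA : lineAngle Z1 Z2 = Real.arccos (|p + q| / (n2 Z1 * n2 Z2)) := by
    rw [lineAngle_eq, abs_div, abs_of_pos hD]
  have hB : lineAngle (refl1 Z1) (refl2 Z2) =
      Real.arccos (|(|p| - |q|)| / (n2 Z1 * n2 Z2)) := by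
    rw [lineAngle_eq, n2_refl1, n2_refl2, hdott, abs_div, abs_of_pos hD]
  have hle : |(|p| - |q|)| ≤ |p + q| := by
    have := abs_abs_sub_abs_le_abs_sub p (-q)
    simpa [sub_neg_eq_add] using this
  have hcs : |p + q| ≤ n2 Z1 * n2 Z2 := cauchy Z1 Z2
  have hge : lineAngle (refl1 Z1) (refl2 Z2) ≥ lineAngle Z1 Z2 := by
    rw [hA, hB]
    apply arccos_anti
    gcongr
  refine ⟨hge, ?_⟩
  rw [hA, hB, adj_iff, ← abs_key (p := p) (q := q)]
  constructor
  · intro h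
    have hb1 : |(|p| - |q|)| / (n2 Z1 * n2 Z2) ≤ 1 :=
      (div_le_one hD).mpr (le_trans hle hcs)
    have hb2 : |p + q| / (n2 Z1 * n2 Z2) ≤ 1 := (div_le_one hD).mpr hcs
    have hn1 : (-1:ℝ) ≤ |(|p| - |q|)| / (n2 Z1 * n2 Z2) := by
      have h0 : (0:ℝ) ≤ |(|p| - |q|)| / (n2 Z1 * n2 Z2) := by positivity
      linarith
    have hn2 : (-1:ℝ) ≤ |p + q| / (n2 Z1 * n2 Z2) := by
      have h0 : (0:ℝ) ≤ |p + q| / (n2 Z1 * n2 Z2) := by positivity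
      linarith
    have := (Real.arccos_inj hn1 hb1 hn2 hb2).mp h
    field_simp at this
    exact (div_left_inj' hD.ne').mp this
  · intro h
    rw [h]
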